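/- Suppose m ∈ ℕ, 0 ≤ i ≤ n, and t ∈ ℕ ∪ {0}. Let (b_j)_{j=0}^t be a decreasing sequence of elements of {0,…,m−1} and (c_j)_{j=0}^t an increasing sequence of elements of {−∞,0,…,i−1}. If c_0 = −∞, then ann_{R_mG_i}⟨p^{b_0}, {p^{b_j}(σ^{p^{c_j}}−1)}_{j=1}^t⟩ equals ⟨p^{m−b_0}⟩ when t = 0, and equals ⟨p^{m−b_0}P(i,c_1),…,p^{m−b_{t−1}}P(i,c_t), p^{m−b_t}⟩ when t > 0. If c_0 ≠ −∞, then ann_{R_mG_i}⟨{p^{b_j}(σ^{p^{c_j}}−1)}_{j=0}^t⟩ equals ⟨P(i,c_0), p^{m−b_0}⟩ when t = 0, and equals ⟨P(i,c_0), p^{m−b_0}P(i,c_1),…,p^{m−b_{t−1}}P(i,c_t), p^{m−b_t}⟩ when t > 0. -/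

import Mathlib

open scoped BigOperators

/-- `U_i = 1 + p^i ℤ` as a subset of `ℤ`. -/
def Uset (p i : ℕ) : Set ℤ := {d : ℤ | ∃ k : ℤ, d = 1 + (p : ℤ) ^ i * k}

/-- `−U_i = {−u : u ∈ U_i}` as a subset of `ℤ`. -/
def negUset (p i : ℕ) : Set ℤ := {d : ℤ | -d ∈ Uset p i}

/-- The coefficient ring `R_m = ℤ/p^mℤ`. -/
abbrev Rm (p m : ℕ) : Type := ZMod (p ^ m)

/-- The cyclic group of order `p^n`, written multiplicatively. -/
abbrev Cyc (p n : ℕ) : Type := Multiplicative (ZMod (p ^ n))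

/-- The group ring `R_m G_n` of the cyclic group of order `p^n` over `ℤ/p^mℤ`. -/
abbrev RG (p m n : ℕ) : Type := MonoidAlgebra (Rm p m) (Cyc p n)

/-- The distinguished generator `σ` of the cyclic group of order `p^n`,
viewed as an element of the group ring `R_m G_n`. -/
noncomputable def sg (p m n : ℕ) : RG p m n :=
  MonoidAlgebra.of (Rm p m) (Cyc p n) (Multiplicative.ofAdd (1 : ZMod (p ^ n)))

/-- The norm operator `P(i,j) = Σ_{k=0}^{p^{i-j}-1} σ^{k p^j}` in `R_m G_n`. -/
noncomputable def Pel (p m n i j : ℕ) : RG p m n :=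
  ∑ k ∈ Finset.range (p ^ (i - j)), sg p m n ^ (k * p ^ j)

/-- The operator `Q_d(i,j) = Σ_{k=0}^{p^{i-j}-1} (d^{p^j})^{p^{i-j}-1-k} (σ^{p^j})^k` in `R_m G_n`. -/
noncomputable def Qel (p m n : ℕ) (d : ℤ) (i j : ℕ) : RG p m n :=
  ∑ k ∈ Finset.range (p ^ (i - j)),
    ((d : RG p m n) ^ p ^ j) ^ (p ^ (i - j) - 1 - k) * sg p m n ^ (p ^ j * k)

/-- `p^a` for `a ∈ {−∞} ∪ ℕ`, with the convention `p^{−∞} = 0`. -/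
def pexp (p : ℕ) (a : WithBot ℕ) : ℕ := WithBot.recBotCoe 0 (fun k => p ^ k) a

/-- `σ^{p^a}` for `a ∈ {−∞} ∪ ℕ`, with the convention `σ^{p^{−∞}} = 0`. -/
noncomputable def sigmaPow (p m n : ℕ) (a : WithBot ℕ) : RG p m n :=
  WithBot.recBotCoe 0 (fun k => sg p m n ^ p ^ k) a

/-- `P(i,c)` for `c ∈ {−∞} ∪ ℕ`, with the convention `P(i,−∞) = 1`. -/
noncomputable def PelW (p m n i : ℕ) (c : WithBot ℕ) : RG p m n :=
  WithBot.recBotCoe 1 (fun k => Pel p m n i k) c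

/-- The submodule of relations defining `X_{a,d,m}`: the free module on generators
`y = e 0` and `x_i = e (i+1)` modulo `(σ-d)y = Σ p^i x_i` and `σ^{p^{a_i}} x_i = x_i`
(where `σ^{p^{−∞}} x_i = 0`). -/
noncomputable def Xrel (p m n : ℕ) (a : ℕ → WithBot ℕ) (d : ℤ) :
    Submodule (RG p m n) (Fin (m + 1) → RG p m n) :=
  Submodule.span (RG p m n)
    (insert
      ((sg p m n - (d : RG p m n)) •
          (Pi.single (0 : Fin (m + 1)) 1 : Fin (m + 1) → RG p m n) -
        ∑ i : Fin m, ((p : RG p m n) ^ (i : ℕ)) •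
          (Pi.single i.succ 1 : Fin (m + 1) → RG p m n))
      (Set.range fun i : Fin m =>
        (sigmaPow p m n (a (i : ℕ)) - 1) •
          (Pi.single i.succ 1 : Fin (m + 1) → RG p m n)))

/-- The `R_m G`-module `X_{a,d,m}`. -/
abbrev Xmod (p m n : ℕ) (a : ℕ → WithBot ℕ) (d : ℤ) : Type :=
  (Fin (m + 1) → RG p m n) ⧸ Xrel p m n a d

/-- The generator `y` of `X_{a,d,m}`. -/
noncomputable def Xy (p m n : ℕ) (a : ℕ → WithBot ℕ) (d : ℤ) : Xmod p m n a d :=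
  Submodule.Quotient.mk (Pi.single (0 : Fin (m + 1)) 1 : Fin (m + 1) → RG p m n)

/-- The generator `x_i` of `X_{a,d,m}`. -/
noncomputable def Xx (p m n : ℕ) (a : ℕ → WithBot ℕ) (d : ℤ) (i : Fin m) : Xmod p m n a d :=
  Submodule.Quotient.mk (Pi.single i.succ 1 : Fin (m + 1) → RG p m n)

/-- A module is indecomposable if it is nonzero and is not the direct sum of two
nonzero submodules. -/
def IsIndecomposableModule (R M : Type*) [Ring R] [AddCommGroup M] [Module R M] : Prop :=
  Nontrivial M ∧ ∀ V W : Submodule R M, IsCompl V W → V = ⊥ ∨ W = ⊥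

/-- Hypotheses (I)–(V) of Theorem 1, together with the requirement
`a ∈ {−∞,0,1,…,n}^m`. -/
def Hyp (p n m : ℕ) (a : ℕ → WithBot ℕ) (d : ℤ) : Prop :=
  (∀ i < m, a i ≤ (n : WithBot ℕ)) ∧
  d ∈ Uset p 1 ∧
  (∀ i < m, d ^ pexp p (a i) ∈ Uset p (i + 1)) ∧
  (∀ i j : ℕ, i < m → 1 ≤ j → i + j < m → a (i + j) ≠ ⊥ →
    ¬(p = 2 ∧ d ∉ Uset p 2 ∧ i = 0 ∧ a 0 = 0) →
    a i + (j : WithBot ℕ) < a (i + j)) ∧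
  (p = 2 → d ∉ Uset p 2 → a 0 = 0 → ∀ j, 1 ≤ j → j < m → a j ≠ 0) ∧
  (p = 2 → n = 1 → a 0 = ⊥) ∧
  (∀ v : ℕ, p = 2 → 2 ≤ m → 2 ≤ v → d ∈ negUset p v → d ∉ negUset p (v + 1) →
    a 0 = 0 → ∀ i, v ≤ i → i < m → ((i - (v - 1) : ℕ) : WithBot ℕ) < a i ∧ a i ≠ ⊥)

/-- The invariant `l(u)`: the dimension over `F_p` of the `F_p G`-submodule of `M/pM`
generated by the class of `u`; equivalently the least `k` with `(σ-1)^k u ∈ pM`. -/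
noncomputable def ell (p m n : ℕ) {M : Type*} [AddCommGroup M] [Module (RG p m n) M]
    (u : M) : ℕ :=
  sInf {k : ℕ | ((sg p m n - 1) ^ k) • u ∈
    (Ideal.span {(p : RG p m n)} • (⊤ : Submodule (RG p m n) M) : Submodule (RG p m n) M)}

/-- `M^⋆ = {u ∈ M : (σ-1)u = 0 and pu = 0}`. -/
def Mstar (p m n : ℕ) (M : Type*) [AddCommGroup M] [Module (RG p m n) M] : Set M :=
  {u : M | (sg p m n - 1) • u = 0 ∧ (p : RG p m n) • u = 0}
/-- The group ring `ℤG` of the cyclic group of order `p^n`. -/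
abbrev ZG (p n : ℕ) : Type := MonoidAlgebra ℤ (Cyc p n)

/-- The generator `σ` as an element of `ℤG`. -/
noncomputable def sgZ (p n : ℕ) : ZG p n :=
  MonoidAlgebra.of ℤ (Cyc p n) (Multiplicative.ofAdd (1 : ZMod (p ^ n)))

/-- The norm operator `P(i,j)` as an element of `ℤG`. -/
noncomputable def PelZ (p n i j : ℕ) : ZG p n :=
  ∑ k ∈ Finset.range (p ^ (i - j)), sgZ p n ^ (k * p ^ j)

/-- The additive map `φ_d : ℤG → ℤ` induced by `σ^t ↦ d^t` for `0 ≤ t < p^n`. -/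
noncomputable def phiZ (p n : ℕ) (d : ℤ) (f : ZG p n) : ℤ :=
  ∑ t ∈ Finset.range (p ^ n), f.coeff (Multiplicative.ofAdd ((t : ℕ) : ZMod (p ^ n))) * d ^ t

/-- The map `φ_d^{(m)} : R_m G_n → R_m` induced by `σ^t ↦ d^t` for `0 ≤ t < p^n`. -/
noncomputable def phiM (p m n : ℕ) (d : ℤ) (f : RG p m n) : Rm p m :=
  ∑ t ∈ Finset.range (p ^ n), f.coeff (Multiplicative.ofAdd ((t : ℕ) : ZMod (p ^ n))) * (d : Rm p m) ^ t

/-- The natural `R_m`-algebra homomorphism `χ_j : R_m G_i → R_m G_j` for `j ≤ i`. -/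
noncomputable def chiMap (p m : ℕ) {i j : ℕ} (h : j ≤ i) : RG p m i →+* RG p m j :=
  MonoidAlgebra.mapDomainRingHom (Rm p m)
    (AddMonoidHom.toMultiplicative
      ((ZMod.castHom (pow_dvd_pow p h) (ZMod (p ^ j))).toAddMonoidHom))

/-- Coefficient reduction `R_m G_n → R_{m-1} G_n`. -/
noncomputable def barMap (p m n : ℕ) (f : RG p m n) : RG p (m - 1) n :=
  MonoidAlgebra.ofCoeff (Finsupp.mapRange (ZMod.castHom (pow_dvd_pow p (Nat.sub_le m 1)) (ZMod (p ^ (m - 1))))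
    (map_zero _) f.coeff)

/-- `W/p^{m-1}W` is a free `R_{m-1}G_k`-module: there is an additive isomorphism with
a finite power of `R_{m-1}G_k` intertwining the actions of `σ` (and hence of the
coefficients, which act through the additive group structure). -/
def QuotFree (p m n k : ℕ) {M : Type*} [AddCommGroup M] [Module (RG p m n) M]
    (W : Submodule (RG p m n) M) : Prop :=
  ∃ (r : ℕ) (e : (W ⧸ (Ideal.span {(p : RG p m n) ^ (m - 1)} •
      (⊤ : Submodule (RG p m n) W))) ≃+ (Fin r → RG p (m - 1) k)),
    ∀ q, e (sg p m n • q) = fun s => sg p (m - 1) k * e q s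
section Ann28

open MonoidAlgebra Multiplicative

variable {p m i : ℕ}

lemma sg_pow' (p m i k : ℕ) :
    (sg p m i) ^ k = MonoidAlgebra.single (Multiplicative.ofAdd ((k : ZMod (p ^ i)))) (1 : Rm p m) := by
  rw [sg, MonoidAlgebra.of_apply, MonoidAlgebra.single_pow, one_pow]
  congr 1
  rw [← ofAdd_nsmul, nsmul_eq_mul, mul_one]

lemma pPow_mul_apply (e : ℕ) (f : RG p m i) (g : Cyc p i) :
    ((p : RG p m i) ^ e * f).coeff g = (p : Rm p m) ^ e * f.coeff g := by
  have : (p : RG p m i) ^ e = MonoidAlgebra.single (1 : Cyc p i) ((p : Rm p m) ^ e) := by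
    rw [← Nat.cast_pow, MonoidAlgebra.natCast_def, Nat.cast_pow]
  rw [this, MonoidAlgebra.single_mul_apply, inv_one, one_mul]

lemma zmod_pow_dvd_iff (hp : p.Prime) {e : ℕ} (he : e ≤ m) (x : ZMod (p ^ m)) :
    (p : ZMod (p ^ m)) ^ e ∣ x ↔ (p : ZMod (p ^ m)) ^ (m - e) * x = 0 := by
  haveI : NeZero (p ^ m) := ⟨pow_ne_zero m hp.ne_zero⟩
  constructor
  · rintro ⟨y, rfl⟩
    rw [← mul_assoc, ← pow_add, Nat.sub_add_cancel he, ← Nat.cast_pow, ZMod.natCast_self, zero_mul]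
  · intro h
    have hx : x = ((x.val : ℕ) : ZMod (p ^ m)) := (ZMod.natCast_zmod_val x).symm
    have h2 : (((p ^ (m - e) * x.val : ℕ) : ZMod (p ^ m))) = 0 := by
      push_cast
      rw [← hx]; exact h
    have h3 : p ^ m ∣ p ^ (m - e) * x.val := (ZMod.natCast_eq_zero_iff _ _).mp h2
    have h4 : p ^ (m - e) * p ^ e ∣ p ^ (m - e) * x.val := by
      rwa [← pow_add, Nat.sub_add_cancel he]
    have h5 : p ^ e ∣ x.val :=
      (Nat.mul_dvd_mul_iff_left (pow_pos hp.pos (m - e))).mp h4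
    obtain ⟨y, hy⟩ := h5
    exact ⟨(y : ZMod (p ^ m)), by rw [hx, hy]; push_cast; ring⟩

lemma exists_pPow_factor (hp : p.Prime) (e : ℕ) (f : RG p m i)
    (hf : ∀ g, (p : Rm p m) ^ e ∣ f.coeff g) : ∃ y, f = (p : RG p m i) ^ e * y := by
  haveI : NeZero (p ^ i) := ⟨pow_ne_zero i hp.ne_zero⟩
  refine ⟨MonoidAlgebra.ofCoeff (Finsupp.equivFunOnFinite.symm (fun g => Classical.choose (hf g))), ?_⟩
  ext g
  rw [pPow_mul_apply]
  have := Classical.choose_spec (hf g)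
  simpa using this

lemma mem_span_pPow (hp : p.Prime) (e : ℕ) (f : RG p m i) :
    f ∈ Ideal.span {(p : RG p m i) ^ e} ↔ ∀ g, (p : Rm p m) ^ e ∣ f.coeff g := by
  constructor
  · intro hf g
    obtain ⟨y, rfl⟩ := Ideal.mem_span_singleton.mp hf
    exact ⟨y.coeff g, pPow_mul_apply e y g⟩
  · intro hf
    obtain ⟨y, hy⟩ := exists_pPow_factor hp e f hf
    exact Ideal.mem_span_singleton.mpr ⟨y, hy⟩

end Ann28
section Ann28B

open MonoidAlgebra Multiplicative

variable {p m i : ℕ}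

lemma sg_pow_pc_mul_pel (hc : c ≤ i) :
    (sg p m i) ^ (p ^ c) * Pel p m i i c = Pel p m i i c := by
  rw [Pel, Finset.mul_sum]
  have key : ∀ k : ℕ, (sg p m i) ^ (p ^ c) * (sg p m i) ^ (k * p ^ c)
      = (sg p m i) ^ ((k + 1) * p ^ c) := by
    intro k; rw [← pow_add]; ring_nf
  simp_rw [key]
  have h1 := Finset.sum_range_succ' (fun k => (sg p m i) ^ (k * p ^ c)) (p ^ (i - c))
  have h2 := Finset.sum_range_succ (fun k => (sg p m i) ^ (k * p ^ c)) (p ^ (i - c))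
  have hend : (sg p m i) ^ (p ^ (i - c) * p ^ c) = (sg p m i) ^ (0 * p ^ c) := by
    rw [← pow_add, Nat.sub_add_cancel hc, zero_mul, pow_zero, sg_pow']
    rw [ZMod.natCast_self]
    rfl
  have := h1.symm.trans h2
  rw [hend] at this
  -- this : (∑ k in range q, sg^((k+1) p^c)) + sg^(0*p^c) = (∑ k in range q, sg^(k p^c)) + sg^(0*p^c)
  exact add_right_cancel this

lemma sg_pow_pc_pow_mul_pel (hc : c ≤ i) (s : ℕ) :
    ((sg p m i) ^ (p ^ c)) ^ s * Pel p m i i c = Pel p m i i c := by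
  induction s with
  | zero => rw [pow_zero, one_mul]
  | succ s ih => rw [pow_succ, mul_assoc, sg_pow_pc_mul_pel hc, ih]

lemma sg_pow_pc'_mul_pel (hcc : c ≤ c') (hc : c ≤ i) :
    (sg p m i) ^ (p ^ c') * Pel p m i i c = Pel p m i i c := by
  have : p ^ c' = p ^ c * p ^ (c' - c) := by
    rw [← pow_add, Nat.add_sub_cancel' hcc]
  rw [this, pow_mul, sg_pow_pc_pow_mul_pel hc]

lemma apply_mul_of_single_mul (f : RG p m i) (τ : Cyc p i)
    (H : MonoidAlgebra.single τ (1 : Rm p m) * f = f) (g : Cyc p i) : f.coeff (τ * g) = f.coeff g := by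
  conv_lhs => rw [← H]
  rw [MonoidAlgebra.single_mul_apply, inv_mul_cancel_left, one_mul]

end Ann28B
section Ann28C

open MonoidAlgebra Multiplicative

variable {p m i : ℕ}

lemma nat_side {P q r D : ℕ} (hP : 0 < P) (hr : r < P) (hD1 : 1 ≤ D) (hD2 : D < 2 * q)
    (hDq : D ≠ q) : P ≤ (r + D * P) % (q * P) := by
  rcases lt_or_ge D q with h | h
  · have hlt : r + D * P < q * P := by
      calc r + D * P < P + D * P := by omega
        _ = (D + 1) * P := by ring
        _ ≤ q * P := Nat.mul_le_mul_right _ (by omega)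
    rw [Nat.mod_eq_of_lt hlt]
    calc P = 1 * P := (one_mul P).symm
      _ ≤ D * P := Nat.mul_le_mul_right _ hD1
      _ ≤ r + D * P := Nat.le_add_left _ _
  · obtain ⟨D', rfl⟩ : ∃ D', D = q + D' := ⟨D - q, by omega⟩
    have hD'1 : 1 ≤ D' := by omega
    have hD'q : D' < q := by omega
    have hx : r + D' * P < q * P := by
      calc r + D' * P < P + D' * P := by omega
        _ = (D' + 1) * P := by ring
        _ ≤ q * P := Nat.mul_le_mul_right _ (by omega)
    have hsplit : r + (q + D') * P = (r + D' * P) + q * P := by ring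
    rw [hsplit, Nat.add_mod_right, Nat.mod_eq_of_lt hx]
    calc P = 1 * P := (one_mul P).symm
      _ ≤ D' * P := Nat.mul_le_mul_right _ hD'1
      _ ≤ r + D' * P := Nat.le_add_left _ _

set_option maxHeartbeats 1000000 in
lemma master (hp : p.Prime) {c : ℕ} (hci : c ≤ i) {α e : ℕ} (hae : α ≤ e) (f : RG p m i) :
    f ∈ Ideal.span {(p : RG p m i) ^ α * Pel p m i i c, (p : RG p m i) ^ e} ↔
      (∀ g, (p : Rm p m) ^ α ∣ f.coeff g) ∧
      (∀ g, (p : Rm p m) ^ e ∣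
        f.coeff (Multiplicative.ofAdd (((p ^ c : ℕ) : ZMod (p ^ i))) * g) - f.coeff g) := by
  haveI : NeZero (p ^ i) := ⟨pow_ne_zero i hp.ne_zero⟩
  have hsingle : MonoidAlgebra.single
      (Multiplicative.ofAdd (((p ^ c : ℕ) : ZMod (p ^ i)))) (1 : Rm p m) = (sg p m i) ^ (p ^ c) :=
    (sg_pow' p m i (p ^ c)).symm
  constructor
  · intro hf
    obtain ⟨x, y, hxy⟩ := Ideal.mem_span_pair.mp hf
    have hf2 : f = (p : RG p m i) ^ α * (Pel p m i i c * x) + (p : RG p m i) ^ e * y := by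
      rw [← hxy]; ring
    have hcoeff : ∀ g, f.coeff g = (p : Rm p m) ^ α * ((Pel p m i i c * x).coeff g)
        + (p : Rm p m) ^ e * (y.coeff g) := by
      intro g
      rw [hf2, MonoidAlgebra.coeff_add, Finsupp.add_apply, pPow_mul_apply, pPow_mul_apply]
    have hNx : ∀ g, (Pel p m i i c * x).coeff
        (Multiplicative.ofAdd (((p ^ c : ℕ) : ZMod (p ^ i))) * g) = (Pel p m i i c * x).coeff g := by
      intro g
      refine apply_mul_of_single_mul _ _ ?_ g
      rw [hsingle, ← mul_assoc, sg_pow_pc_mul_pel hci]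
    constructor
    · intro g
      rw [hcoeff g]
      exact dvd_add (Dvd.intro _ rfl) (dvd_mul_of_dvd_left (pow_dvd_pow _ hae) _)
    · intro g
      have key : f.coeff (Multiplicative.ofAdd (((p ^ c : ℕ) : ZMod (p ^ i))) * g) - f.coeff g
          = (p : Rm p m) ^ e
            * (y.coeff (Multiplicative.ofAdd (((p ^ c : ℕ) : ZMod (p ^ i))) * g) - y.coeff g) := by
        rw [hcoeff _, hcoeff g, hNx g]; ring
      exact Dvd.intro _ key.symm
  · rintro ⟨h1, h2⟩
    -- step lemma
    have step : ∀ s g, (p : Rm p m) ^ e ∣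
        f.coeff (Multiplicative.ofAdd (((s * p ^ c : ℕ) : ZMod (p ^ i))) * g) - f.coeff g := by
      intro s
      induction s with
      | zero => intro g; simp
      | succ s ih =>
        intro g
        have e1 : (Multiplicative.ofAdd ((((s + 1) * p ^ c : ℕ) : ZMod (p ^ i))) * g)
            = Multiplicative.ofAdd (((p ^ c : ℕ) : ZMod (p ^ i)))
              * (Multiplicative.ofAdd (((s * p ^ c : ℕ) : ZMod (p ^ i))) * g) := by
          rw [← mul_assoc, ← ofAdd_add]
          congr 1
          push_cast
          ring
        rw [e1]
        have hd := dvd_add (h2 (Multiplicative.ofAdd (((s * p ^ c : ℕ) : ZMod (p ^ i))) * g))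
          (ih g)
        rwa [sub_add_sub_cancel] at hd
    -- construction
    set w : Cyc p i → Rm p m := fun g => Classical.choose (h1 g) with hw
    have hwspec : ∀ g, f.coeff g = (p : Rm p m) ^ α * w g := fun g => Classical.choose_spec (h1 g)
    set u : RG p m i := MonoidAlgebra.ofCoeff (Finsupp.equivFunOnFinite.symm
      (fun g => if (Multiplicative.toAdd g).val < p ^ c then w g else 0)) with hu
    have hu_apply : ∀ g, u.coeff g = if (Multiplicative.toAdd g).val < p ^ c then w g else 0 := by
      intro g; rw [hu]; rfl
    have hPpos : 0 < p ^ c := pow_pos hp.pos c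
    have hPQ : p ^ (i - c) * p ^ c = p ^ i := by
      rw [← pow_add, Nat.sub_add_cancel hci]
    have hPle : p ^ c ≤ p ^ i := Nat.pow_le_pow_right hp.pos hci
    -- key sum computation
    have key1 : ∀ g : Cyc p i, (Pel p m i i c * u).coeff g
        = w (Multiplicative.ofAdd ((((Multiplicative.toAdd g).val % p ^ c : ℕ)
            : ZMod (p ^ i)))) := by
      intro g
      set r : ℕ := (Multiplicative.toAdd g).val % p ^ c with hrdef
      set s : ℕ := (Multiplicative.toAdd g).val / p ^ c with hsdef
      have hvg : ((s * p ^ c + r : ℕ) : ZMod (p ^ i)) = Multiplicative.toAdd g := by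
        have h0 : p ^ c * s + r = (Multiplicative.toAdd g).val := Nat.div_add_mod _ _
        rw [show s * p ^ c + r = p ^ c * s + r by ring, h0]
        exact ZMod.natCast_zmod_val _
      have hr : r < p ^ c := Nat.mod_lt _ hPpos
      have hs : s < p ^ (i - c) := by
        rw [hsdef, Nat.div_lt_iff_lt_mul hPpos, hPQ]
        exact ZMod.val_lt _
      clear_value r s
      have expand : (Pel p m i i c * u).coeff g
          = ∑ k ∈ Finset.range (p ^ (i - c)),
              u.coeff ((Multiplicative.ofAdd (((k * p ^ c : ℕ) : ZMod (p ^ i))))⁻¹ * g) := by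
        rw [Pel, Finset.sum_mul, MonoidAlgebra.coeff_sum, Finsupp.finset_sum_apply]
        refine Finset.sum_congr rfl fun k _ => ?_
        rw [sg_pow', MonoidAlgebra.single_mul_apply, one_mul]
      rw [expand]
      rw [Finset.sum_eq_single_of_mem s (Finset.mem_range.mpr hs)]
      · -- main term
        have helt : (Multiplicative.ofAdd (((s * p ^ c : ℕ) : ZMod (p ^ i))))⁻¹ * g
            = Multiplicative.ofAdd ((r : ZMod (p ^ i))) := by
          apply Multiplicative.toAdd.injective
          show -(((s * p ^ c : ℕ) : ZMod (p ^ i))) + Multiplicative.toAdd g = (r : ZMod (p ^ i))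
          rw [← hvg]
          push_cast
          ring
        rw [helt, hu_apply]
        have hval : (Multiplicative.toAdd (Multiplicative.ofAdd ((r : ZMod (p ^ i))))).val = r := by
          show ((r : ZMod (p ^ i))).val = r
          rw [ZMod.val_natCast, Nat.mod_eq_of_lt (lt_of_lt_of_le hr hPle)]
        rw [hval, if_pos hr]
      · -- side terms
        intro k hk hne
        rw [Finset.mem_range] at hk
        have helt : (Multiplicative.ofAdd (((k * p ^ c : ℕ) : ZMod (p ^ i))))⁻¹ * g
            = Multiplicative.ofAdd
                (((r + (s + p ^ (i - c) - k) * p ^ c : ℕ) : ZMod (p ^ i))) := by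
          apply Multiplicative.toAdd.injective
          show -(((k * p ^ c : ℕ) : ZMod (p ^ i))) + Multiplicative.toAdd g
            = ((r + (s + p ^ (i - c) - k) * p ^ c : ℕ) : ZMod (p ^ i))
          rw [← hvg]
          have hDk : (s + p ^ (i - c) - k) + k = s + p ^ (i - c) := by omega
          have harith : r + (s + p ^ (i - c) - k) * p ^ c + k * p ^ c
              = s * p ^ c + r + p ^ i := by
            have h'' : ((s + p ^ (i - c) - k) + k) * p ^ c = (s + p ^ (i - c)) * p ^ c := by
              rw [hDk]
            rw [add_mul, add_mul] at h''
            have := hPQ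
            linarith
          have := congrArg (fun z : ℕ => ((z : ZMod (p ^ i)))) harith
          push_cast at this ⊢
          have hz : ((p : ZMod (p ^ i))) ^ i = 0 := by
            rw [← Nat.cast_pow, ZMod.natCast_self]
          rw [hz] at this
          linear_combination -this
        rw [helt, hu_apply]
        have hval : (Multiplicative.toAdd (Multiplicative.ofAdd
            (((r + (s + p ^ (i - c) - k) * p ^ c : ℕ) : ZMod (p ^ i))))).val
            = (r + (s + p ^ (i - c) - k) * p ^ c) % (p ^ (i - c) * p ^ c) := by
          show (((r + (s + p ^ (i - c) - k) * p ^ c : ℕ) : ZMod (p ^ i))).val = _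
          rw [ZMod.val_natCast, hPQ]
        rw [hval, if_neg]
        push_neg
        refine nat_side hPpos hr ?_ ?_ ?_
        · omega
        · omega
        · omega
    -- finish
    have hrep : ∀ g : Cyc p i, (p : Rm p m) ^ e ∣
        f.coeff g - f.coeff (Multiplicative.ofAdd ((((Multiplicative.toAdd g).val % p ^ c : ℕ)
          : ZMod (p ^ i)))) := by
      intro g
      set r : ℕ := (Multiplicative.toAdd g).val % p ^ c with hrdef
      set s : ℕ := (Multiplicative.toAdd g).val / p ^ c with hsdef
      have hg : g = Multiplicative.ofAdd (((s * p ^ c : ℕ) : ZMod (p ^ i)))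
          * Multiplicative.ofAdd ((r : ZMod (p ^ i))) := by
        apply Multiplicative.toAdd.injective
        show Multiplicative.toAdd g = ((s * p ^ c : ℕ) : ZMod (p ^ i)) + (r : ZMod (p ^ i))
        have h0 : p ^ c * s + r = (Multiplicative.toAdd g).val := Nat.div_add_mod _ _
        have : ((p ^ c * s + r : ℕ) : ZMod (p ^ i)) = Multiplicative.toAdd g := by
          rw [h0]; exact ZMod.natCast_zmod_val _
        rw [← this]; push_cast; ring
      have hstep := step s (Multiplicative.ofAdd ((r : ZMod (p ^ i))))
      rw [← hg] at hstep
      exact hstep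
    have hv : ∀ g, (p : Rm p m) ^ e ∣ (f - (p : RG p m i) ^ α * (Pel p m i i c * u)).coeff g := by
      intro g
      rw [MonoidAlgebra.coeff_sub, Finsupp.sub_apply, pPow_mul_apply, key1 g, ← hwspec _]
      exact hrep g
    obtain ⟨y, hy⟩ := exists_pPow_factor hp e _ hv
    refine Ideal.mem_span_pair.mpr ⟨u, y, ?_⟩
    have : f - (p : RG p m i) ^ α * (Pel p m i i c * u) = (p : RG p m i) ^ e * y := hy
    linear_combination -this

end Ann28C
section Ann28D

open MonoidAlgebra Multiplicative

variable {p m i : ℕ}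

lemma pel_pair_char (hp : p.Prime) {c : ℕ} (hci : c ≤ i) (e : ℕ) (f : RG p m i) :
    f ∈ Ideal.span {Pel p m i i c, (p : RG p m i) ^ e} ↔
      ∀ g, (p : Rm p m) ^ e ∣
        f.coeff (Multiplicative.ofAdd (((p ^ c : ℕ) : ZMod (p ^ i))) * g) - f.coeff g := by
  have h := master hp hci (Nat.zero_le e) f
  rw [pow_zero, one_mul] at h
  rw [h]
  simp [one_dvd]

lemma pPow_eq_zero (hp : p.Prime) : (p : RG p m i) ^ m = 0 := by
  rw [← Nat.cast_pow, MonoidAlgebra.natCast_def, ZMod.natCast_self, MonoidAlgebra.single_zero]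

lemma pel_mem_span_pel (hp : p.Prime) {c c' : ℕ} (hcc : c ≤ c') (hi : c' ≤ i) :
    Pel p m i i c ∈ Ideal.span {Pel p m i i c'} := by
  have hspan : Ideal.span {Pel p m i i c', (p : RG p m i) ^ m}
      = Ideal.span {Pel p m i i c'} := by
    rw [pPow_eq_zero hp, Set.pair_comm]
    exact Submodule.span_insert_zero
  rw [← hspan, pel_pair_char hp hi m]
  intro g
  have hmul : MonoidAlgebra.single (Multiplicative.ofAdd (((p ^ c' : ℕ) : ZMod (p ^ i))))
      (1 : Rm p m) * Pel p m i i c = Pel p m i i c := by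
    rw [← sg_pow' p m i (p ^ c')]
    exact sg_pow_pc'_mul_pel hcc (le_trans hcc hi)
  rw [apply_mul_of_single_mul _ _ hmul g, sub_self]
  exact dvd_zero _

lemma gen_ann_iff (hp : p.Prime) {bj : ℕ} (hbj : bj ≤ m) {k : ℕ} (r : RG p m i) :
    r * ((p : RG p m i) ^ bj * ((sg p m i) ^ (p ^ k) - 1)) = 0 ↔
      ∀ g, (p : Rm p m) ^ (m - bj) ∣
        r.coeff (Multiplicative.ofAdd (((p ^ k : ℕ) : ZMod (p ^ i))) * g) - r.coeff g := by
  set τ : Cyc p i := Multiplicative.ofAdd (((p ^ k : ℕ) : ZMod (p ^ i))) with hτ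
  have hrw : ∀ x, (r * ((p : RG p m i) ^ bj * ((sg p m i) ^ (p ^ k) - 1))).coeff x
      = (p : Rm p m) ^ bj * (r.coeff (τ⁻¹ * x) - r.coeff x) := by
    intro x
    have hre : r * ((p : RG p m i) ^ bj * ((sg p m i) ^ (p ^ k) - 1))
        = (p : RG p m i) ^ bj * (MonoidAlgebra.single τ (1 : Rm p m) * r - r) := by
      rw [hτ, ← sg_pow']; ring
    rw [hre, pPow_mul_apply, MonoidAlgebra.coeff_sub, Finsupp.sub_apply, MonoidAlgebra.single_mul_apply, one_mul]
  have hsub : m - (m - bj) = bj := Nat.sub_sub_self hbj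
  constructor
  · intro h g
    have h0 : (p : Rm p m) ^ bj * (r.coeff (τ⁻¹ * (τ * g)) - r.coeff (τ * g)) = 0 := by
      rw [← hrw (τ * g), h]
      rfl
    rw [inv_mul_cancel_left] at h0
    have hd : (p : Rm p m) ^ (m - bj) ∣ r.coeff g - r.coeff (τ * g) := by
      rw [zmod_pow_dvd_iff hp (Nat.sub_le m bj), hsub]
      exact h0
    rw [← neg_sub (r.coeff g) (r.coeff (τ * g))]
    exact dvd_neg.mpr hd
  · intro h
    ext x
    rw [hrw x]
    have hd := h (τ⁻¹ * x)
    rw [mul_inv_cancel_left] at hd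
    have hd2 : (p : Rm p m) ^ (m - bj) ∣ r.coeff (τ⁻¹ * x) - r.coeff x := by
      rw [← neg_sub (r.coeff x) (r.coeff (τ⁻¹ * x))]
      exact dvd_neg.mpr hd
    rw [zmod_pow_dvd_iff hp (Nat.sub_le m bj), hsub] at hd2
    rw [hd2]
    rfl

lemma gen_ann_bot_iff (hp : p.Prime) {bj : ℕ} (hbj : bj ≤ m) (r : RG p m i) :
    r * ((p : RG p m i) ^ bj * ((0 : RG p m i) - 1)) = 0 ↔
      ∀ g, (p : Rm p m) ^ (m - bj) ∣ r.coeff g := by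
  have h1 : r * ((p : RG p m i) ^ bj * ((0 : RG p m i) - 1)) = -((p : RG p m i) ^ bj * r) := by
    ring
  rw [h1, neg_eq_zero]
  have hsub : m - (m - bj) = bj := Nat.sub_sub_self hbj
  constructor
  · intro h g
    rw [zmod_pow_dvd_iff hp (Nat.sub_le m bj), hsub, ← pPow_mul_apply bj r g, h]
    rfl
  · intro h
    ext x
    rw [pPow_mul_apply]
    have := h x
    rw [zmod_pow_dvd_iff hp (Nat.sub_le m bj), hsub] at this
    rw [this]
    rfl

end Ann28D
section Ann28E

open MonoidAlgebra Multiplicative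

variable {p m i : ℕ}

/-- The coefficient condition attached to one generator. -/
def Cnd (p m i e : ℕ) (co : WithBot ℕ) (f : RG p m i) : Prop :=
  WithBot.recBotCoe (∀ g, (p : Rm p m) ^ e ∣ f.coeff g)
    (fun k => ∀ g, (p : Rm p m) ^ e ∣
      f.coeff (Multiplicative.ofAdd (((p ^ k : ℕ) : ZMod (p ^ i))) * g) - f.coeff g) co

lemma Cnd_bot (e : ℕ) (f : RG p m i) :
    Cnd p m i e ⊥ f = ∀ g, (p : Rm p m) ^ e ∣ f.coeff g := rfl

lemma Cnd_coe (e k : ℕ) (f : RG p m i) :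
    Cnd p m i e (WithBot.some k) f = ∀ g, (p : Rm p m) ^ e ∣
      f.coeff (Multiplicative.ofAdd (((p ^ k : ℕ) : ZMod (p ^ i))) * g) - f.coeff g := rfl

/-- The per-generator annihilator ideal. -/
noncomputable def AnnI (p m i e : ℕ) (co : WithBot ℕ) : Ideal (RG p m i) :=
  WithBot.recBotCoe (Ideal.span {(p : RG p m i) ^ e})
    (fun k => Ideal.span {Pel p m i i k, (p : RG p m i) ^ e}) co

/-- The extra generating set coming from `c 0`. -/
noncomputable def Eset (p m i : ℕ) (co : WithBot ℕ) : Set (RG p m i) :=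
  WithBot.recBotCoe (∅ : Set (RG p m i)) (fun k => ({Pel p m i i k} : Set (RG p m i))) co

lemma Eset_bot : Eset p m i ⊥ = ∅ := rfl

lemma Eset_coe (k : ℕ) : Eset p m i (WithBot.some k) = {Pel p m i i k} := rfl

lemma lt_i_of_some {co : WithBot ℕ} {k : ℕ} (h : WithBot.some k = co)
    (hco : co < (i : WithBot ℕ)) : k < i := by
  rw [Nat.cast_withBot, ← h] at hco
  exact WithBot.coe_lt_coe.mp hco

lemma AnnI_char (hp : p.Prime) {co : WithBot ℕ} (hco : co < (i : WithBot ℕ)) (e : ℕ)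
    (f : RG p m i) : f ∈ AnnI p m i e co ↔ Cnd p m i e co f := by
  induction co using WithBot.recBotCoe with
  | bot => exact mem_span_pPow hp e f
  | coe k => exact pel_pair_char hp (lt_i_of_some rfl hco).le e f

lemma span_pPow_le_AnnI (e : ℕ) (co : WithBot ℕ) :
    Ideal.span {(p : RG p m i) ^ e} ≤ AnnI p m i e co := by
  induction co using WithBot.recBotCoe with
  | bot => exact le_refl _
  | coe k => exact Ideal.span_mono (fun z hz => Set.mem_insert_iff.mpr (Or.inr hz))

lemma span_pel_le_AnnI (e k : ℕ) :
    Ideal.span {Pel p m i i k} ≤ AnnI p m i e (WithBot.some k) :=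
  Ideal.span_mono (fun z hz => Set.mem_insert_iff.mpr (Or.inl hz))

lemma gen_subset (hp : p.Prime) {t : ℕ} {b : ℕ → ℕ} {c : ℕ → WithBot ℕ}
    (hbanti : ∀ j k : ℕ, j < k → k ≤ t → b k < b j)
    (hc : ∀ j ≤ t, c j < (i : WithBot ℕ))
    (hcmono : ∀ j k : ℕ, j < k → k ≤ t → c j < c k)
    {j : ℕ} (hj : j ≤ t) :
    (Eset p m i (c 0) ∪
        ({x : RG p m i | ∃ j' < t,
            x = (p : RG p m i) ^ (m - b j') * PelW p m i i (c (j' + 1))} ∪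
          {(p : RG p m i) ^ (m - b t)})) ⊆ ↑(AnnI p m i (m - b j) (c j)) := by
  have hble : ∀ j1 j2, j1 ≤ j2 → j2 ≤ t → b j2 ≤ b j1 := by
    intro j1 j2 h12 h2
    rcases eq_or_lt_of_le h12 with rfl | h
    · exact le_refl _
    · exact (hbanti j1 j2 h h2).le
  have hcle : ∀ j1 j2, j1 ≤ j2 → j2 ≤ t → c j1 ≤ c j2 := by
    intro j1 j2 h12 h2
    rcases eq_or_lt_of_le h12 with rfl | h
    · exact le_refl _
    · exact (hcmono j1 j2 h h2).le
  have hpowmem : ∀ x : RG p m i, (p : RG p m i) ^ (m - b j) ∣ x →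
      x ∈ AnnI p m i (m - b j) (c j) := by
    intro x hx
    exact span_pPow_le_AnnI _ _ (Ideal.mem_span_singleton.mpr hx)
  have hpelmem : ∀ (x : RG p m i) (k' : ℕ), WithBot.some k' ≤ c j →
      x ∈ Ideal.span {Pel p m i i k'} → x ∈ AnnI p m i (m - b j) (c j) := by
    intro x k' hk' hx
    have hne : c j ≠ ⊥ := by
      intro hbot
      rw [hbot, le_bot_iff] at hk'
      exact Option.some_ne_none k' hk'
    obtain ⟨kj, hkj⟩ := WithBot.ne_bot_iff_exists.mp hne
    have hk'kj : k' ≤ kj := by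
      rw [← hkj] at hk'
      exact WithBot.coe_le_coe.mp hk'
    have hkji : kj < i := lt_i_of_some hkj (hc j hj)
    rw [← hkj]
    refine span_pel_le_AnnI _ _ ?_
    obtain ⟨y, hy⟩ := Ideal.mem_span_singleton.mp hx
    obtain ⟨z, hz⟩ := Ideal.mem_span_singleton.mp (pel_mem_span_pel hp hk'kj hkji.le
      : Pel p m i i k' ∈ Ideal.span {Pel p m i i kj})
    refine Ideal.mem_span_singleton.mpr ?_
    rw [hy, hz]
    exact ⟨z * y, by ring⟩
  intro x hx
  rcases hx with hx | hx
  · rcases eq_or_ne (c 0) ⊥ with hc0 | hc0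
    · rw [hc0, Eset_bot] at hx
      exact absurd hx (Set.notMem_empty x)
    · obtain ⟨k0, hk0⟩ := WithBot.ne_bot_iff_exists.mp hc0
      rw [← hk0, Eset_coe] at hx
      have hxe : x = Pel p m i i k0 := hx
      have hle : WithBot.some k0 ≤ c j := by
        rw [hk0]
        exact hcle 0 j (Nat.zero_le j) hj
      exact hpelmem x k0 hle (hxe ▸ Ideal.subset_span rfl)
  rcases hx with hx | hx
  · obtain ⟨j', hj't, rfl⟩ := hx
    have hbot : (⊥ : WithBot ℕ) < c (j' + 1) :=
      lt_of_le_of_lt bot_le (hcmono 0 (j' + 1) (Nat.succ_pos j') hj't)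
    obtain ⟨k', hk'⟩ := WithBot.ne_bot_iff_exists.mp (WithBot.bot_lt_iff_ne_bot.mp hbot)
    rcases le_or_gt j j' with h | h
    · refine hpowmem _ (dvd_mul_of_dvd_left (pow_dvd_pow _ ?_) _)
      exact Nat.sub_le_sub_left (hble j j' h hj't.le) m
    · have hle : WithBot.some k' ≤ c j := by
        rw [hk']
        exact hcle (j' + 1) j h hj
      refine hpelmem _ k' hle ?_
      rw [← hk']
      exact Ideal.mul_mem_left _ _ (Ideal.subset_span rfl)
  · have hxe : x = (p : RG p m i) ^ (m - b t) := hx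
    refine hpowmem x ?_
    rw [hxe]
    exact pow_dvd_pow _ (Nat.sub_le_sub_left (hble j t hj (le_refl t)) m)

lemma rhs_char (hp : p.Prime) {t : ℕ} {b : ℕ → ℕ} {c : ℕ → WithBot ℕ}
    (hb : ∀ j ≤ t, b j < m)
    (hbanti : ∀ j k : ℕ, j < k → k ≤ t → b k < b j)
    (hc : ∀ j ≤ t, c j < (i : WithBot ℕ))
    (hcmono : ∀ j k : ℕ, j < k → k ≤ t → c j < c k)
    (f : RG p m i) :
    f ∈ Ideal.span (Eset p m i (c 0) ∪
        ({x : RG p m i | ∃ j' < t,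
            x = (p : RG p m i) ^ (m - b j') * PelW p m i i (c (j' + 1))} ∪
          {(p : RG p m i) ^ (m - b t)})) ↔
      ∀ j ≤ t, Cnd p m i (m - b j) (c j) f := by
  constructor
  · intro hf j hj
    exact (AnnI_char hp (hc j hj) _ f).mp
      (Ideal.span_le.mpr (gen_subset hp hbanti hc hcmono hj) hf)
  · induction t with
    | zero =>
      intro hcond
      have hset : {x : RG p m i | ∃ j' < 0,
          x = (p : RG p m i) ^ (m - b j') * PelW p m i i (c (j' + 1))} = ∅ := by
        ext z; simp
      rw [hset, Set.empty_union]
      rcases eq_or_ne (c 0) ⊥ with hc0 | hc0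
      · rw [hc0, Eset_bot, Set.empty_union]
        have h0 := hcond 0 (le_refl 0)
        rw [hc0, Cnd_bot] at h0
        exact (mem_span_pPow hp _ f).mpr h0
      · obtain ⟨k0, hk0⟩ := WithBot.ne_bot_iff_exists.mp hc0
        rw [← hk0, Eset_coe, Set.singleton_union]
        have h0 := hcond 0 (le_refl 0)
        rw [← hk0, Cnd_coe] at h0
        have hk0i : k0 ≤ i := (lt_i_of_some hk0 (hc 0 (le_refl 0))).le
        exact (pel_pair_char hp hk0i _ f).mpr h0
    | succ t ih =>
      intro hcond
      have hb' : ∀ j ≤ t, b j < m := fun j hj => hb j (le_trans hj (Nat.le_succ t))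
      have hbanti' : ∀ j k : ℕ, j < k → k ≤ t → b k < b j :=
        fun j k h1 h2 => hbanti j k h1 (le_trans h2 (Nat.le_succ t))
      have hc' : ∀ j ≤ t, c j < (i : WithBot ℕ) := fun j hj => hc j (le_trans hj (Nat.le_succ t))
      have hcmono' : ∀ j k : ℕ, j < k → k ≤ t → c j < c k :=
        fun j k h1 h2 => hcmono j k h1 (le_trans h2 (Nat.le_succ t))
      have hf_t : f ∈ Ideal.span (Eset p m i (c 0) ∪
          ({x : RG p m i | ∃ j' < t,
              x = (p : RG p m i) ^ (m - b j') * PelW p m i i (c (j' + 1))} ∪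
            {(p : RG p m i) ^ (m - b t)})) := by
        exact ih hb' hbanti' hc' hcmono' (fun j hj => hcond j (le_trans hj (Nat.le_succ t)))
      rw [show (Eset p m i (c 0) ∪
          ({x : RG p m i | ∃ j' < t,
              x = (p : RG p m i) ^ (m - b j') * PelW p m i i (c (j' + 1))} ∪
            {(p : RG p m i) ^ (m - b t)}))
          = ((Eset p m i (c 0) ∪
          {x : RG p m i | ∃ j' < t,
              x = (p : RG p m i) ^ (m - b j') * PelW p m i i (c (j' + 1))}) ∪
            {(p : RG p m i) ^ (m - b t)}) from (Set.union_assoc _ _ _).symm,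
        Ideal.span_union] at hf_t
      obtain ⟨x, hx, y, hy, hxy⟩ := Submodule.mem_sup.mp hf_t
      have hbot : (⊥ : WithBot ℕ) < c (t + 1) :=
        lt_of_le_of_lt bot_le (hcmono 0 (t + 1) (Nat.succ_pos t) (le_refl _))
      obtain ⟨k1, hk1⟩ := WithBot.ne_bot_iff_exists.mp (WithBot.bot_lt_iff_ne_bot.mp hbot)
      have hk1i : k1 < i := lt_i_of_some hk1 (hc (t + 1) (le_refl _))
      have hxA : x ∈ AnnI p m i (m - b (t + 1)) (c (t + 1)) := by
        refine Ideal.span_le.mpr (gen_subset hp hbanti hc hcmono (le_refl (t + 1))) ?_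
        refine Ideal.span_mono ?_ hx
        intro z hz
        rcases hz with hz | hz
        · exact Or.inl hz
        · obtain ⟨j', hj', hze⟩ := hz
          exact Or.inr (Or.inl ⟨j', lt_trans hj' (Nat.lt_succ_self t), hze⟩)
      have hxcnd : ∀ g, (p : Rm p m) ^ (m - b (t + 1)) ∣
          x.coeff (Multiplicative.ofAdd (((p ^ k1 : ℕ) : ZMod (p ^ i))) * g) - x.coeff g := by
        have h' := (AnnI_char hp (hc (t + 1) (le_refl _)) _ x).mp hxA
        rw [← hk1, Cnd_coe] at h'
        exact h'
      have hfcnd : ∀ g, (p : Rm p m) ^ (m - b (t + 1)) ∣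
          f.coeff (Multiplicative.ofAdd (((p ^ k1 : ℕ) : ZMod (p ^ i))) * g) - f.coeff g := by
        have h' := hcond (t + 1) (le_refl _)
        rw [← hk1, Cnd_coe] at h'
        exact h'
      have hyx : y = f - x := by rw [← hxy]; ring
      have hy1 : ∀ g, (p : Rm p m) ^ (m - b t) ∣ y.coeff g :=
        (mem_span_pPow hp _ y).mp hy
      have hy2 : ∀ g, (p : Rm p m) ^ (m - b (t + 1)) ∣
          y.coeff (Multiplicative.ofAdd (((p ^ k1 : ℕ) : ZMod (p ^ i))) * g) - y.coeff g := by
        intro g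
        rw [hyx, MonoidAlgebra.coeff_sub, Finsupp.sub_apply, Finsupp.sub_apply]
        have heq : f.coeff (Multiplicative.ofAdd (((p ^ k1 : ℕ) : ZMod (p ^ i))) * g) - x.coeff
            (Multiplicative.ofAdd (((p ^ k1 : ℕ) : ZMod (p ^ i))) * g) - (f.coeff g - x.coeff g)
            = (f.coeff (Multiplicative.ofAdd (((p ^ k1 : ℕ) : ZMod (p ^ i))) * g) - f.coeff g)
              - (x.coeff (Multiplicative.ofAdd (((p ^ k1 : ℕ) : ZMod (p ^ i))) * g) - x.coeff g) := by
          ring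
        rw [heq]
        exact dvd_sub (hfcnd g) (hxcnd g)
      have hble : m - b t ≤ m - b (t + 1) :=
        Nat.sub_le_sub_left (hbanti t (t + 1) (Nat.lt_succ_self t) (le_refl _)).le m
      have hymem : y ∈ Ideal.span {(p : RG p m i) ^ (m - b t) * Pel p m i i k1,
          (p : RG p m i) ^ (m - b (t + 1))} :=
        (master hp hk1i.le hble y).mpr ⟨hy1, hy2⟩
      rw [← hxy]
      have hsx : x ∈ Ideal.span (Eset p m i (c 0) ∪
          ({x : RG p m i | ∃ j' < t + 1,
              x = (p : RG p m i) ^ (m - b j') * PelW p m i i (c (j' + 1))} ∪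
            {(p : RG p m i) ^ (m - b (t + 1))})) := by
        refine Ideal.span_mono ?_ hx
        intro z hz
        rcases hz with hz | hz
        · exact Or.inl hz
        · obtain ⟨j', hj', hze⟩ := hz
          exact Or.inr (Or.inl ⟨j', lt_trans hj' (Nat.lt_succ_self t), hze⟩)
      have hyy : y ∈ Ideal.span (Eset p m i (c 0) ∪
          ({x : RG p m i | ∃ j' < t + 1,
              x = (p : RG p m i) ^ (m - b j') * PelW p m i i (c (j' + 1))} ∪
            {(p : RG p m i) ^ (m - b (t + 1))})) := by
        refine Ideal.span_le.mpr ?_ hymem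
        intro z hz
        rcases hz with hz | hz
        · refine Ideal.subset_span (Or.inr (Or.inl ⟨t, Nat.lt_succ_self t, ?_⟩))
          rw [hz, ← hk1]
          rfl
        · exact Ideal.subset_span (Or.inr (Or.inr hz))
      exact Ideal.add_mem _ hsx hyy

end Ann28E
section Ann28F

open MonoidAlgebra Multiplicative

variable {p m i : ℕ}

lemma sigmaPow_bot : sigmaPow p m i ⊥ = 0 := rfl

lemma sigmaPow_coe (k : ℕ) : sigmaPow p m i (WithBot.some k) = sg p m i ^ p ^ k := rfl

lemma gen0_iff_cnd (hp : p.Prime) {b0 : ℕ} (hb0 : b0 ≤ m) (r : RG p m i) :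
    r * (p : RG p m i) ^ b0 = 0 ↔ Cnd p m i (m - b0) ⊥ r := by
  have h := gen_ann_bot_iff hp hb0 r
  rw [show r * ((p : RG p m i) ^ b0 * ((0 : RG p m i) - 1)) = -(r * (p : RG p m i) ^ b0) by ring,
    neg_eq_zero] at h
  rw [Cnd_bot]
  exact h

lemma gen_iff_cnd (hp : p.Prime) {bj : ℕ} (hbj : bj ≤ m) (co : WithBot ℕ) (r : RG p m i) :
    r * ((p : RG p m i) ^ bj * (sigmaPow p m i co - 1)) = 0 ↔ Cnd p m i (m - bj) co r := by
  induction co using WithBot.recBotCoe with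
  | bot =>
    rw [sigmaPow_bot, Cnd_bot]
    exact gen_ann_bot_iff hp hbj r
  | coe k =>
    rw [sigmaPow_coe, Cnd_coe]
    exact gen_ann_iff hp hbj r

end Ann28F
/-- Lemma 2.8 (`le:kerint`). -/
theorem ann_of_ideal_gens (p n m : ℕ) (hp : p.Prime) (hm : 1 ≤ m) (i : ℕ) (hin : i ≤ n)
    (t : ℕ) (b : ℕ → ℕ) (c : ℕ → WithBot ℕ)
    (hb : ∀ j ≤ t, b j < m)
    (hbanti : ∀ j k : ℕ, j < k → k ≤ t → b k < b j)
    (hc : ∀ j ≤ t, c j < (i : WithBot ℕ))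
    (hcmono : ∀ j k : ℕ, j < k → k ≤ t → c j < c k) :
    (c 0 = ⊥ →
      (Ideal.span ({(p : RG p m i) ^ b 0} ∪
          {x : RG p m i | ∃ j : ℕ, 1 ≤ j ∧ j ≤ t ∧
            x = (p : RG p m i) ^ b j * (sigmaPow p m i (c j) - 1)})).annihilator =
        Ideal.span ({x : RG p m i | ∃ j < t,
            x = (p : RG p m i) ^ (m - b j) * PelW p m i i (c (j + 1))} ∪
          {(p : RG p m i) ^ (m - b t)})) ∧
    (c 0 ≠ ⊥ →
      (Ideal.span {x : RG p m i | ∃ j ≤ t,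
          x = (p : RG p m i) ^ b j * (sigmaPow p m i (c j) - 1)}).annihilator =
        Ideal.span (insert (PelW p m i i (c 0))
          ({x : RG p m i | ∃ j < t,
              x = (p : RG p m i) ^ (m - b j) * PelW p m i i (c (j + 1))} ∪
            {(p : RG p m i) ^ (m - b t)}))) := by
  have hble : ∀ j ≤ t, b j ≤ m := fun j hj => (hb j hj).le
  constructor
  · intro hbot
    ext r
    have hRHS := rhs_char (i := i) hp hb hbanti hc hcmono r
    rw [hbot, Eset_bot, Set.empty_union] at hRHS
    refine Iff.trans (Iff.trans (Submodule.mem_annihilator_span _ r) ?_) hRHS.symm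
    constructor
    · intro h j hj
      rcases Nat.eq_zero_or_pos j with rfl | hjpos
      · rw [hbot]
        refine (gen0_iff_cnd hp (hble 0 (Nat.zero_le t)) r).mp ?_
        have h0 := h ⟨(p : RG p m i) ^ b 0, Or.inl rfl⟩
        rwa [smul_eq_mul] at h0
      · refine (gen_iff_cnd hp (hble j hj) (c j) r).mp ?_
        have h0 := h ⟨_, Or.inr ⟨j, hjpos, hj, rfl⟩⟩
        rwa [smul_eq_mul] at h0
    · rintro h ⟨x, hx | hx⟩
      · have hxe : x = (p : RG p m i) ^ b 0 := hx
        show r • x = 0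
        rw [smul_eq_mul, hxe]
        have h0 := h 0 (Nat.zero_le t)
        rw [hbot] at h0
        exact (gen0_iff_cnd hp (hble 0 (Nat.zero_le t)) r).mpr h0
      · obtain ⟨j, hj1, hjt, rfl⟩ := hx
        show r • _ = 0
        rw [smul_eq_mul]
        exact (gen_iff_cnd hp (hble j hjt) (c j) r).mpr (h j hjt)
  · intro hne
    obtain ⟨k0, hk0⟩ := WithBot.ne_bot_iff_exists.mp hne
    ext r
    have hRHS := rhs_char (i := i) hp hb hbanti hc hcmono r
    rw [← hk0, Eset_coe, Set.singleton_union] at hRHS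
    have hPelW : PelW p m i i (c 0) = Pel p m i i k0 := by rw [← hk0]; rfl
    rw [hPelW]
    refine Iff.trans (Iff.trans (Submodule.mem_annihilator_span _ r) ?_) hRHS.symm
    constructor
    · intro h j hj
      refine (gen_iff_cnd hp (hble j hj) (c j) r).mp ?_
      have h0 := h ⟨_, ⟨j, hj, rfl⟩⟩
      rwa [smul_eq_mul] at h0
    · rintro h ⟨x, ⟨j, hj, rfl⟩⟩
      show r • _ = 0
      rw [smul_eq_mul]
      exact (gen_iff_cnd hp (hble j hj) (c j) r).mpr (h j hj)
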